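/- For fixed c ∈ (0,1), with p_n = (c − 1/n)/(1 − 1/n), the normalized coded shuffling rate R_c/q = (1/(np_n)²)((1−p_n)^{n+1} + (n−1)p_n(1−p_n) − (1−p_n)²) satisfies n·(R_c/q) → (1−c)/c as n → ∞. -/

import Mathlib

open Filter Topology

lemma coded_shuffling_key (n : ℕ) (q : ℝ) (hn : (n : ℝ) ≠ 0) (hq : q ≠ 0) :
    (n : ℝ) * ((1 / ((n : ℝ) * q) ^ 2) *
        ((1 - q) ^ (n + 1) + ((n : ℝ) - 1) * q * (1 - q) - (1 - q) ^ 2))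
      = ((n : ℝ) - 1) / n * ((1 - q) / q)
        + (1 - q) ^ (n + 1) / ((n : ℝ) * q ^ 2)
        - (1 - q) ^ 2 / ((n : ℝ) * q ^ 2) := by
  field_simp
  ring

/-- For fixed `c ∈ (0,1)`, with `p_n = (c - 1/n)/(1 - 1/n)`, the normalized coded
shuffling rate `R_c/q = (1/(np_n)²)((1-p_n)^{n+1} + (n-1)p_n(1-p_n) - (1-p_n)²)`
satisfies `n · (R_c/q) → (1-c)/c` as `n → ∞`. -/
theorem coded_shuffling_rate_asymptotic
    (c : ℝ) (hc : c ∈ Set.Ioo (0 : ℝ) 1) :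
    Tendsto
      (fun n : ℕ =>
        (n : ℝ) *
          ((1 / ((n : ℝ) * ((c - 1 / n) / (1 - 1 / n))) ^ 2) *
            ((1 - (c - 1 / n) / (1 - 1 / n)) ^ (n + 1)
              + ((n : ℝ) - 1) * ((c - 1 / n) / (1 - 1 / n)) * (1 - (c - 1 / n) / (1 - 1 / n))
              - (1 - (c - 1 / n) / (1 - 1 / n)) ^ 2)))
      atTop (𝓝 ((1 - c) / c)) := by
  obtain ⟨hc0, hc1⟩ := hc
  set p : ℕ → ℝ := fun n => (c - 1 / n) / (1 - 1 / n) with hp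
  have hinv : Tendsto (fun n : ℕ => (1 : ℝ) / n) atTop (𝓝 0) :=
    tendsto_one_div_atTop_nhds_zero_nat
  have hplim : Tendsto p atTop (𝓝 c) := by
    have h1 : Tendsto (fun n : ℕ => c - 1 / (n : ℝ)) atTop (𝓝 (c - 0)) :=
      tendsto_const_nhds.sub hinv
    have h2 : Tendsto (fun n : ℕ => 1 - 1 / (n : ℝ)) atTop (𝓝 (1 - 0)) :=
      tendsto_const_nhds.sub hinv
    have h3 := h1.div h2 (by norm_num)
    rw [sub_zero, sub_zero, div_one] at h3
    exact h3
  -- eventual bounds on p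
  have hmem : ∀ᶠ n in atTop, p n ∈ Set.Ioo (c / 2) ((c + 1) / 2) :=
    hplim.eventually (Ioo_mem_nhds (by linarith) (by linarith))
  have hev : ∀ᶠ n : ℕ in atTop,
      c / 2 < p n ∧ p n < (c + 1) / 2 ∧ (1 : ℕ) ≤ n := by
    filter_upwards [hmem, eventually_ge_atTop 1] with n h hn
    exact ⟨h.1, h.2, hn⟩
  set r : ℝ := 1 - c / 2 with hr
  have hr0 : 0 ≤ r := by simp [hr]; linarith
  have hr1 : r < 1 := by simp [hr]; linarith
  -- term 1
  have hg1 : Tendsto (fun n : ℕ => ((n : ℝ) - 1) / n * ((1 - p n) / p n)) atTop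
      (𝓝 (1 * ((1 - c) / c))) := by
    have ha : Tendsto (fun n : ℕ => ((n : ℝ) - 1) / n) atTop (𝓝 1) := by
      have h : Tendsto (fun n : ℕ => 1 - 1 / (n : ℝ)) atTop (𝓝 (1 - 0)) :=
        tendsto_const_nhds.sub hinv
      rw [sub_zero] at h
      apply h.congr'
      filter_upwards [eventually_ge_atTop 1] with n hn
      have hn0 : (n : ℝ) ≠ 0 := by positivity
      field_simp
    exact ha.mul ((tendsto_const_nhds.sub hplim).div hplim hc0.ne')
  -- term 2
  have hg2 : Tendsto (fun n : ℕ => (1 - p n) ^ (n + 1) / ((n : ℝ) * p n ^ 2)) atTop (𝓝 0) := by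
    have hrpow : Tendsto (fun n : ℕ => r ^ (n + 1) / (c ^ 2 / 4)) atTop (𝓝 0) := by
      have h0 : Tendsto (fun n : ℕ => r ^ n) atTop (𝓝 0) :=
        tendsto_pow_atTop_nhds_zero_of_lt_one hr0 hr1
      have h1 : Tendsto (fun n : ℕ => r * r ^ n) atTop (𝓝 (r * 0)) := h0.const_mul r
      have h2 : Tendsto (fun n : ℕ => r ^ (n + 1)) atTop (𝓝 0) := by
        simpa [pow_succ, mul_comm] using h1
      simpa using h2.div_const (c ^ 2 / 4)
    apply squeeze_zero_norm' _ hrpow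
    filter_upwards [hev] with n ⟨h1, h2, h3⟩
    have hp0 : 0 < p n := lt_trans (by positivity) h1
    have hp1 : p n < 1 := by linarith
    have hn0 : (1 : ℝ) ≤ (n : ℝ) := by exact_mod_cast h3
    have hnum : (1 - p n) ^ (n + 1) ≤ r ^ (n + 1) :=
      pow_le_pow_left₀ (by linarith) (by simp [hr]; linarith) _
    have hden : c ^ 2 / 4 ≤ (n : ℝ) * p n ^ 2 := by
      have h4 : (c / 2) ^ 2 ≤ p n ^ 2 := by
        apply pow_le_pow_left₀ (by linarith) (le_of_lt h1)
      calc c ^ 2 / 4 = (c / 2) ^ 2 := by ring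
        _ ≤ p n ^ 2 := h4
        _ = 1 * p n ^ 2 := (one_mul _).symm
        _ ≤ (n : ℝ) * p n ^ 2 := by nlinarith
    have hpos : 0 < (n : ℝ) * p n ^ 2 := by positivity
    rw [Real.norm_eq_abs, abs_div, abs_of_nonneg (pow_nonneg (by linarith) _ : (0:ℝ) ≤ (1 - p n) ^ (n+1)),
      abs_of_pos hpos]
    exact div_le_div₀ (by positivity) hnum (by positivity) hden
  -- term 3
  have hg3 : Tendsto (fun n : ℕ => (1 - p n) ^ 2 / ((n : ℝ) * p n ^ 2)) atTop (𝓝 0) := by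
    have h : Tendsto (fun n : ℕ => (1 / (n : ℝ)) * ((1 - p n) / p n) ^ 2) atTop
        (𝓝 (0 * ((1 - c) / c) ^ 2)) :=
      hinv.mul (((tendsto_const_nhds.sub hplim).div hplim hc0.ne').pow 2)
    rw [zero_mul] at h
    apply h.congr'
    filter_upwards [hev] with n ⟨h1, h2, h3⟩
    have hp0 : 0 < p n := lt_trans (by positivity) h1
    have hn0 : (0 : ℝ) < (n : ℝ) := by exact_mod_cast h3
    field_simp
  have htot := (hg1.add hg2).sub hg3
  rw [add_zero, sub_zero, one_mul] at htot
  apply htot.congr'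
  filter_upwards [hev] with n ⟨h1, h2, h3⟩
  have hp0 : 0 < p n := lt_trans (by positivity) h1
  have hn0 : (n : ℝ) ≠ 0 := by
    have : (0:ℝ) < (n:ℝ) := by exact_mod_cast h3
    exact ne_of_gt this
  exact (coded_shuffling_key n (p n) hn0 hp0.ne').symm
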